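/- Define for each binary tree T the Tamari polynomial B_T(x) recursively by B_∅ = 1 and B_T(x) = x·B_L(x)·(x·B_R(x) − B_R(1))/(x − 1), where L and R are the left and right subtrees of T. Then B_T(x) = Σ_{T' ≤ T} x^{g(T')}, summed over binary trees T' less than or equal to T in the Tamari order, where g(T') is the number of nodes on the leftmost branch of T'; in particular B_T(1) equals the number of trees below or equal to T in the Tamari lattice. -/

import Mathlib

/-- Unlabelled binary trees. -/
inductive Tree0 where
  | leaf : Tree0
  | node : Tree0 → Tree0 → Tree0
deriving DecidableEq

namespace Tree0

/-- Number of nodes on the leftmost branch (following only left-child edges). -/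
def leftBranch : Tree0 → ℕ
  | leaf => 0
  | node l _ => leftBranch l + 1

/-- One right rotation somewhere in the tree: `y(x(A,B),C) ↦ x(A,y(B,C))`. -/
inductive Rot : Tree0 → Tree0 → Prop
  | root (A B C : Tree0) : Rot (node (node A B) C) (node A (node B C))
  | left {l l' : Tree0} (r : Tree0) : Rot l l' → Rot (node l r) (node l' r)
  | right (l : Tree0) {r r' : Tree0} : Rot r r' → Rot (node l r) (node l r')

/-- The Tamari order: transitive closure of right rotation. -/
def tamariLE : Tree0 → Tree0 → Prop := Relation.ReflTransGen Rot

end Tree0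

namespace Tree0

def size : Tree0 → ℕ
  | leaf => 0
  | node l r => size l + size r + 1

def graft (S : Tree0) : Tree0 → ℕ → Tree0
  | R, 0 => node S R
  | node l r, k+1 => node (graft S l k) r
  | leaf, _+1 => node S leaf

@[simp] lemma graft_zero (S R : Tree0) : graft S R 0 = node S R := by
  cases R <;> rfl

@[simp] lemma graft_succ (S l r : Tree0) (k : ℕ) :
    graft S (node l r) (k+1) = node (graft S l k) r := rfl

lemma size_graft (S : Tree0) : ∀ (R : Tree0) (k : ℕ),
    size (graft S R k) = size S + size R + 1
  | R, 0 => by simp [size]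
  | node l r, k+1 => by simp [size, size_graft S l k]; omega
  | leaf, k+1 => by simp [graft, size]

lemma leftBranch_graft (S : Tree0) : ∀ (R : Tree0) (k : ℕ), k ≤ leftBranch R →
    leftBranch (graft S R k) = k + (leftBranch S + 1)
  | R, 0, _ => by simp [leftBranch]
  | node l r, k+1, h => by
      simp [leftBranch] at h ⊢
      rw [leftBranch_graft S l k h]; omega
  | leaf, k+1, h => by simp [leftBranch] at h

lemma leftBranch_le_size : ∀ T : Tree0, leftBranch T ≤ size T
  | leaf => le_refl _
  | node l r => by
      have := leftBranch_le_size l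
      simp [leftBranch, size]; omega

lemma graft_inj : ∀ {S S' R R' : Tree0} {k k' : ℕ},
    k ≤ leftBranch R → k' ≤ leftBranch R' → size S = size S' →
    graft S R k = graft S' R' k' → S = S' ∧ R = R' ∧ k = k'
  | S, S', R, R', 0, 0, _, _, _, h => by
      simp at h; exact ⟨h.1, h.2, rfl⟩
  | S, S', R, node l r, 0, k'+1, _, hk', hs, h => by
      simp [leftBranch] at hk' h
      exfalso
      have := size_graft S' l k'
      rw [← h.1] at this; omega
  | S, S', node l r, R', k+1, 0, hk, _, hs, h => by
      simp [leftBranch] at hk h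
      exfalso
      have := size_graft S l k
      rw [h.1] at this; omega
  | S, S', node l r, node l' r', k+1, k'+1, hk, hk', hs, h => by
      simp [leftBranch] at hk hk' h
      obtain ⟨h1, h2⟩ := h
      obtain ⟨e1, e2, e3⟩ := graft_inj hk hk' hs h1
      exact ⟨e1, by rw [e2, h2], by rw [e3]⟩
  | S, S', leaf, R', k+1, _, hk, _, _, _ => by simp [leftBranch] at hk
  | S, S', node _ _, leaf, k+1, k'+1, _, hk', _, _ => by simp [leftBranch] at hk'

lemma size_eq_of_rot {a b : Tree0} (h : Rot a b) : size a = size b := by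
  induction h with
  | root A B C => simp [size]; omega
  | left r _ ih => simp [size, ih]
  | right l _ ih => simp [size, ih]

def dset : Tree0 → Finset Tree0
  | leaf => {leaf}
  | node L R => (dset R).biUnion fun R' =>
      (Finset.range (R'.leftBranch + 1)).biUnion fun k =>
        (dset L).image fun S => graft S R' k

lemma mem_below_node {x L R : Tree0} : x ∈ dset (node L R) ↔
    ∃ R' ∈ dset R, ∃ k ≤ leftBranch R', ∃ S ∈ dset L, x = graft S R' k := by
  simp only [dset, Finset.mem_biUnion, Finset.mem_range, Finset.mem_image,
    Nat.lt_succ_iff]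
  constructor
  · rintro ⟨R', hR', k, hk, S, hS, rfl⟩
    exact ⟨R', hR', k, hk, S, hS, rfl⟩
  · rintro ⟨R', hR', k, hk, S, hS, rfl⟩
    exact ⟨R', hR', k, hk, S, hS, rfl⟩

lemma self_mem_below : ∀ T : Tree0, T ∈ dset T
  | leaf => by simp [dset]
  | node L R => mem_below_node.2
      ⟨R, self_mem_below R, 0, Nat.zero_le _, L, self_mem_below L, (graft_zero L R).symm⟩

lemma size_of_mem_below : ∀ {T x : Tree0}, x ∈ dset T → size x = size T
  | leaf, x, hx => by simp [dset] at hx; subst hx; rfl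
  | node L R, x, hx => by
      obtain ⟨R', hR', k, hk, S, hS, rfl⟩ := mem_below_node.1 hx
      rw [size_graft, size_of_mem_below hS, size_of_mem_below hR']
      rfl

lemma rot_node_inv {a l r : Tree0} (h : Rot a (node l r)) :
    (∃ B C, r = node B C ∧ a = node (node l B) C) ∨
    (∃ l', Rot l' l ∧ a = node l' r) ∨
    (∃ r', Rot r' r ∧ a = node l r') := by
  generalize hb : node l r = b at h
  cases h with
  | root A B C =>
      injection hb with h1 h2
      subst h1; subst h2
      exact Or.inl ⟨B, C, rfl, rfl⟩
  | @left la lb rc hl =>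
      injection hb with h1 h2
      subst h1; subst h2
      exact Or.inr (Or.inl ⟨la, hl, rfl⟩)
  | @right lc ra rb hr =>
      injection hb with h1 h2
      subst h1; subst h2
      exact Or.inr (Or.inr ⟨ra, hr, rfl⟩)

lemma rot_graft : ∀ {a S R : Tree0} {k : ℕ}, k ≤ leftBranch R →
    Rot a (graft S R k) →
    (∃ S', Rot S' S ∧ a = graft S' R k) ∨
    (∃ R' k', Rot R' R ∧ k' ≤ leftBranch R' ∧ a = graft S R' k') ∨
    (k + 1 ≤ leftBranch R ∧ a = graft S R (k+1)) := by
  intro a S R k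
  induction k generalizing a R with
  | zero =>
    intro _ h
    rw [graft_zero] at h
    rcases rot_node_inv h with ⟨B, C, rfl, rfl⟩ | ⟨S', hS', rfl⟩ | ⟨R', hR', rfl⟩
    · right; right
      refine ⟨by simp [leftBranch], ?_⟩
      show node (node S B) C = graft S (node B C) (0+1)
      simp [graft]
    · left; exact ⟨S', hS', by simp⟩
    · right; left; exact ⟨R', 0, hR', Nat.zero_le _, by simp⟩
  | succ k ih =>
    intro hk h
    match R, hk with
    | node l r, hk =>
      have hkl : k ≤ leftBranch l := by simp [leftBranch] at hk; omega
      rw [graft_succ] at h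
      rcases rot_node_inv h with ⟨B, C, rfl, rfl⟩ | ⟨a', ha', rfl⟩ | ⟨r', hr', rfl⟩
      · right; left
        refine ⟨node (node l B) C, (k+1)+1, Rot.root l B C, ?_, ?_⟩
        · simp [leftBranch]; omega
        · simp only [graft_succ]
      · rcases ih hkl ha' with ⟨S', hS', rfl⟩ | ⟨l', k', hl', hk', rfl⟩ | ⟨hlt, rfl⟩
        · left; exact ⟨S', hS', by simp [graft_succ]⟩
        · right; left
          refine ⟨node l' r, k'+1, Rot.left r hl', ?_, by simp [graft_succ]⟩
          simp [leftBranch]; omega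
        · right; right
          refine ⟨by simp [leftBranch]; omega, by simp [graft_succ]⟩
      · right; left
        refine ⟨node l r', k+1, Rot.right l hr', ?_, by simp [graft_succ]⟩
        simp [leftBranch]; omega

lemma below_closed : ∀ {T a b : Tree0}, Rot a b → b ∈ dset T → a ∈ dset T
  | leaf, a, b, h, hb => by
      simp [dset] at hb; subst hb; cases h
  | node L R, a, b, h, hb => by
      obtain ⟨R', hR', k, hk, S, hS, rfl⟩ := mem_below_node.1 hb
      rcases rot_graft hk h with ⟨S', hS', rfl⟩ | ⟨R'', k', hR'', hk', rfl⟩ | ⟨hlt, rfl⟩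
      · exact mem_below_node.2 ⟨R', hR', k, hk, S', below_closed hS' hS, rfl⟩
      · exact mem_below_node.2 ⟨R'', below_closed hR'' hR', k', hk', S, hS, rfl⟩
      · exact mem_below_node.2 ⟨R', hR', k+1, hlt, S, hS, rfl⟩

lemma tamariLE_node_left {l l' : Tree0} (r : Tree0) (h : tamariLE l l') :
    tamariLE (node l r) (node l' r) :=
  Relation.ReflTransGen.lift (fun t => node t r) (fun _ _ hr => Rot.left r hr) _ _ h

lemma tamariLE_node_right (l : Tree0) {r r' : Tree0} (h : tamariLE r r') :
    tamariLE (node l r) (node l r') :=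
  Relation.ReflTransGen.lift (fun t => node l t) (fun _ _ hr => Rot.right l hr) _ _ h

lemma graft_tamariLE (S : Tree0) : ∀ (R : Tree0) (k : ℕ), k ≤ leftBranch R →
    tamariLE (graft S R k) (node S R)
  | R, 0, _ => by rw [graft_zero]; exact Relation.ReflTransGen.refl
  | node l r, k+1, h => by
      have hkl : k ≤ leftBranch l := by simp [leftBranch] at h; omega
      rw [graft_succ]
      have h1 : tamariLE (node (graft S l k) r) (node (node S l) r) :=
        tamariLE_node_left r (graft_tamariLE S l k hkl)
      exact h1.trans (Relation.ReflTransGen.single (Rot.root S l r))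
  | leaf, k+1, h => by simp [leftBranch] at h

lemma mem_below_iff : ∀ {T x : Tree0}, x ∈ dset T ↔ tamariLE x T := by
  intro T x
  constructor
  · intro hx
    induction T generalizing x with
    | leaf => simp [dset] at hx; subst hx; exact Relation.ReflTransGen.refl
    | node L R ihL ihR =>
        obtain ⟨R', hR', k, hk, S, hS, rfl⟩ := mem_below_node.1 hx
        exact (graft_tamariLE S R' k hk).trans
          ((tamariLE_node_right S (ihR hR')).trans (tamariLE_node_left R (ihL hS)))
  · intro hx
    induction hx using Relation.ReflTransGen.head_induction_on with
    | refl => exact self_mem_below T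
    | head hab _ ih => exact below_closed hab ih

end Tree0

open Polynomial

/-- The operator `g ↦ (x·g(x) − g(1))/(x−1)`, an exact division by the monic `X - 1`. -/
noncomputable def deltaPoly (p : Polynomial ℤ) : Polynomial ℤ :=
  (Polynomial.X * p - Polynomial.C (p.eval 1)) /ₘ (Polynomial.X - Polynomial.C 1)

namespace Tree0

open Polynomial Finset

lemma graft_eq_graft {L S S' R1 R2 : Tree0} {k k' : ℕ}
    (hS : S ∈ dset L) (hS' : S' ∈ dset L)
    (hk : k ≤ leftBranch R1) (hk' : k' ≤ leftBranch R2)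
    (h : graft S R1 k = graft S' R2 k') : S = S' ∧ R1 = R2 ∧ k = k' :=
  graft_inj hk hk'
    (by rw [size_of_mem_below hS, size_of_mem_below hS']) h

lemma sum_dset_node (L R : Tree0) (f : Tree0 → Polynomial ℤ) :
    ∑ x ∈ dset (node L R), f x =
      ∑ R' ∈ dset R, ∑ k ∈ Finset.range (leftBranch R' + 1), ∑ S ∈ dset L,
        f (graft S R' k) := by
  rw [show dset (node L R) = (dset R).biUnion (fun R' =>
      (Finset.range (R'.leftBranch + 1)).biUnion fun k =>
        (dset L).image fun S => graft S R' k) from rfl]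
  rw [Finset.sum_biUnion]
  · refine Finset.sum_congr rfl fun R' hR' => ?_
    rw [Finset.sum_biUnion]
    · refine Finset.sum_congr rfl fun k hk => ?_
      rw [Finset.sum_image]
      intro x hx y hy hxy
      exact (graft_eq_graft hx hy (Nat.lt_succ_iff.1 (Finset.mem_range.1 hk))
        (Nat.lt_succ_iff.1 (Finset.mem_range.1 hk)) hxy).1
    · intro k1 h1 k2 h2 hne
      simp only [Finset.disjoint_left, Finset.mem_image]
      rintro x ⟨S1, hS1, rfl⟩ ⟨S2, hS2, hx⟩
      exact hne (graft_eq_graft hS2 hS1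
        (Nat.lt_succ_iff.1 (Finset.mem_range.1 (by simpa using h2)))
        (Nat.lt_succ_iff.1 (Finset.mem_range.1 (by simpa using h1))) hx).2.2.symm
  · intro R1 h1 R2 h2 hne
    simp only [Finset.disjoint_left, Finset.mem_biUnion, Finset.mem_image,
      Finset.mem_range, Nat.lt_succ_iff]
    rintro x ⟨k1, hk1, S1, hS1, rfl⟩ ⟨k2, hk2, S2, hS2, hx⟩
    exact hne (graft_eq_graft hS2 hS1 hk2 hk1 hx).2.1.symm

lemma B_formula (B : Tree0 → Polynomial ℤ)
    (hleaf : B Tree0.leaf = 1)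
    (hnode : ∀ l r : Tree0,
      B (Tree0.node l r) = Polynomial.X * B l * deltaPoly (B r)) :
    ∀ T, B T = ∑ T' ∈ dset T, (X : Polynomial ℤ) ^ leftBranch T' := by
  intro T
  induction T with
  | leaf =>
      rw [hleaf, show dset leaf = {leaf} from rfl]
      simp [leftBranch]
  | node L R ihL ihR =>
      have heval : (B R).eval 1 = ((dset R).card : ℤ) := by
        rw [ihR, eval_finset_sum]
        simp
      have hq : deltaPoly (B R) =
          ∑ R' ∈ dset R, ∑ k ∈ Finset.range (leftBranch R' + 1),
            (X : Polynomial ℤ) ^ k := by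
        have hfac : (X : Polynomial ℤ) * B R - C ((B R).eval 1) =
            (X - C 1) * ∑ R' ∈ dset R, ∑ k ∈ Finset.range (leftBranch R' + 1),
              (X : Polynomial ℤ) ^ k := by
          rw [heval, ihR]
          calc (X : Polynomial ℤ) * (∑ R' ∈ dset R, X ^ leftBranch R')
                - C ((dset R).card : ℤ)
              = ∑ R' ∈ dset R, ((X : Polynomial ℤ) ^ (leftBranch R' + 1) - 1) := by
                rw [Finset.sum_sub_distrib, Finset.mul_sum]
                congr 1
                · exact Finset.sum_congr rfl fun R' _ => by rw [pow_succ]; ring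
                · simp
            _ = (X - C 1) * ∑ R' ∈ dset R, ∑ k ∈ Finset.range (leftBranch R' + 1),
                  (X : Polynomial ℤ) ^ k := by
                rw [Finset.mul_sum]
                exact (Finset.sum_congr rfl fun R' _ => by
                  rw [C_1, mul_comm, geom_sum_mul]).symm
        rw [deltaPoly, hfac, mul_divByMonic_cancel_left _ (monic_X_sub_C 1)]
      rw [hnode, ihL, hq, sum_dset_node L R (fun T' => (X : Polynomial ℤ) ^ leftBranch T')]
      rw [Finset.mul_sum]
      refine Finset.sum_congr rfl fun R' hR' => ?_
      rw [Finset.mul_sum]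
      refine Finset.sum_congr rfl fun k hk => ?_
      rw [Finset.mul_sum, Finset.sum_mul]
      refine Finset.sum_congr rfl fun S hS => ?_
      rw [leftBranch_graft S R' k (Nat.lt_succ_iff.1 (Finset.mem_range.1 hk))]
      ring

end Tree0

/-- The Tamari polynomials, defined by `B_∅ = 1` and
`B_T(x) = x·B_L(x)·(x·B_R(x) − B_R(1))/(x−1)`, satisfy
`B_T(x) = Σ_{T' ≤ T} x^{g(T')}` (sum over trees below `T` in the Tamari order, `g` the
number of nodes on the leftmost branch); in particular `B_T(1)` counts the trees below
or equal to `T`. -/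
theorem tamari_polynomial_counts (B : Tree0 → Polynomial ℤ)
    (hleaf : B Tree0.leaf = 1)
    (hnode : ∀ l r : Tree0,
      B (Tree0.node l r) = Polynomial.X * B l * deltaPoly (B r)) :
    (∀ (T : Tree0) (m : ℕ),
      (B T).coeff m =
        (Set.ncard {T' : Tree0 | Tree0.tamariLE T' T ∧ T'.leftBranch = m} : ℤ)) ∧
    (∀ T : Tree0,
      (B T).eval 1 = (Set.ncard {T' : Tree0 | Tree0.tamariLE T' T} : ℤ)) := by
  have hB := Tree0.B_formula B hleaf hnode
  constructor
  · intro T m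
    have hset : {T' : Tree0 | Tree0.tamariLE T' T ∧ T'.leftBranch = m} =
        ↑((Tree0.dset T).filter fun T' => T'.leftBranch = m) := by
      ext x
      simp [Tree0.mem_below_iff, and_comm]
    rw [hset, Set.ncard_coe_finset, hB, Polynomial.finset_sum_coeff]
    simp only [Polynomial.coeff_X_pow]
    rw [Finset.sum_boole]
    norm_cast
    congr 1
    exact Finset.filter_congr fun x _ => by simp [eq_comm]
  · intro T
    have hset : {T' : Tree0 | Tree0.tamariLE T' T} = ↑(Tree0.dset T) := by
      ext x; simp [Tree0.mem_below_iff]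
    rw [hset, Set.ncard_coe_finset, hB, Polynomial.eval_finset_sum]
    simp
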